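/- arXiv:0908.2959 — 6 statements merged into one kernel-verified Lean document; each statement's English description precedes it below -/
import Mathlib

section
/- Let C be a coalgebra, N a (C,C)-bicomodule, and γ: N → k a linear functional. Then the map β: C ⋊ N → C defined by β(c,n) = c − n_{<-1>} γ(n_{<0>}) + γ(n_{[0]}) n_{[1]} is a morphism of coalgebras from the trivial coextension C ⋊ N to C. -/
open TensorProduct LinearMap

/-- For a coalgebra `C`, a `(C,C)`-bicomodule `N` and a linear
functional `γ : N → k`, the map `β : C ⋊ N → C`,
`β(c,n) = c − n₍₋₁₎ γ(n₍₀₎) + γ(n₍₀₎) n₍₁₎`, is a morphism of coalgebras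
from the trivial coextension `C ⋊ N` to `C`. -/
theorem trivial_coextension_beta_is_coalgebra_map
    {k : Type*} [Field k]
    {C : Type*} [AddCommGroup C] [Module k C] [Coalgebra k C]
    {N : Type*} [AddCommGroup N] [Module k N]
    (ρl : N →ₗ[k] C ⊗[k] N)
    (hlcounit : ∀ n : N, (TensorProduct.lid k N)
      ((LinearMap.rTensor N (Coalgebra.counit (R := k) (A := C))) (ρl n)) = n)
    (hlcoassoc : (TensorProduct.assoc k C C N).toLinearMap ∘ₗ
        LinearMap.rTensor N (Coalgebra.comul (R := k) (A := C)) ∘ₗ ρl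
      = LinearMap.lTensor C ρl ∘ₗ ρl)
    (ρr : N →ₗ[k] N ⊗[k] C)
    (hrcounit : ∀ n : N, (TensorProduct.rid k N)
      ((LinearMap.lTensor N (Coalgebra.counit (R := k) (A := C))) (ρr n)) = n)
    (hrcoassoc : (TensorProduct.assoc k N C C).toLinearMap ∘ₗ
        LinearMap.rTensor C ρr ∘ₗ ρr
      = LinearMap.lTensor N (Coalgebra.comul (R := k) (A := C)) ∘ₗ ρr)
    (hcompat : LinearMap.lTensor C ρr ∘ₗ ρl
      = (TensorProduct.assoc k C N C).toLinearMap ∘ₗ LinearMap.rTensor C ρl ∘ₗ ρr)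
    -- the trivial coextension structure on C ⊕ N
    (Δ : (C × N) →ₗ[k] (C × N) ⊗[k] (C × N))
    (hΔ : Δ =
      TensorProduct.map (LinearMap.inl k C N) (LinearMap.inl k C N) ∘ₗ
        Coalgebra.comul ∘ₗ LinearMap.fst k C N
      + TensorProduct.map (LinearMap.inl k C N) (LinearMap.inr k C N) ∘ₗ
        ρl ∘ₗ LinearMap.snd k C N
      + TensorProduct.map (LinearMap.inr k C N) (LinearMap.inl k C N) ∘ₗ
        ρr ∘ₗ LinearMap.snd k C N)
    (ε : (C × N) →ₗ[k] k)
    (hε : ε = Coalgebra.counit ∘ₗ LinearMap.fst k C N)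
    -- an arbitrary linear functional γ ∈ N*
    (γ : N →ₗ[k] k)
    -- the map β(c,n) = c − n₍₋₁₎ γ(n₍₀₎) + γ(n₍₀₎) n₍₁₎
    (β : (C × N) →ₗ[k] C)
    (hβ : β = LinearMap.fst k C N
      - (TensorProduct.rid k C).toLinearMap ∘ₗ LinearMap.lTensor C γ ∘ₗ
          ρl ∘ₗ LinearMap.snd k C N
      + (TensorProduct.lid k C).toLinearMap ∘ₗ LinearMap.rTensor C γ ∘ₗ
          ρr ∘ₗ LinearMap.snd k C N) :
    Coalgebra.counit (R := k) (A := C) ∘ₗ β = ε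
    ∧ TensorProduct.map β β ∘ₗ Δ = Coalgebra.comul ∘ₗ β := by
  set G1 : N →ₗ[k] C :=
    (TensorProduct.rid k C).toLinearMap ∘ₗ LinearMap.lTensor C γ ∘ₗ ρl with hG1
  set G2 : N →ₗ[k] C :=
    (TensorProduct.lid k C).toLinearMap ∘ₗ LinearMap.rTensor C γ ∘ₗ ρr with hG2
  have hβ' : β = LinearMap.fst k C N - G1 ∘ₗ LinearMap.snd k C N
      + G2 ∘ₗ LinearMap.snd k C N := by
    rw [hβ, hG1, hG2]; simp only [comp_assoc]
  -- counit claims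
  have hc1 : Coalgebra.counit (R := k) (A := C) ∘ₗ G1 = γ := by
    ext n
    have key : ∀ x : C ⊗[k] N,
        Coalgebra.counit (R := k) (A := C) ((TensorProduct.rid k C).toLinearMap ((lTensor C γ) x))
        = γ ((TensorProduct.lid k N).toLinearMap ((rTensor N (Coalgebra.counit (R := k) (A := C))) x)) := by
      intro x
      induction x using TensorProduct.induction_on with
      | zero => simp
      | tmul c m => simp [mul_comm]
      | add x y hx hy => simp only [map_add, hx, hy]
    simp only [hG1, comp_apply]
    rw [key]
    have := hlcounit n
    simp only [LinearEquiv.coe_coe] at this ⊢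
    rw [this]
  have hc2 : Coalgebra.counit (R := k) (A := C) ∘ₗ G2 = γ := by
    ext n
    have key : ∀ x : N ⊗[k] C,
        Coalgebra.counit (R := k) (A := C) ((TensorProduct.lid k C).toLinearMap ((rTensor C γ) x))
        = γ ((TensorProduct.rid k N).toLinearMap ((lTensor N (Coalgebra.counit (R := k) (A := C))) x)) := by
      intro x
      induction x using TensorProduct.induction_on with
      | zero => simp
      | tmul m c => simp [mul_comm]
      | add x y hx hy => simp only [map_add, hx, hy]
    simp only [hG2, comp_apply]
    rw [key]
    have := hrcounit n
    simp only [LinearEquiv.coe_coe] at this ⊢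
    rw [this]
  -- comultiplication claims
  have hg1 : Coalgebra.comul (R := k) (A := C) ∘ₗ G1 = lTensor C G1 ∘ₗ ρl := by
    have k1 : lTensor C (TensorProduct.rid k C).toLinearMap ∘ₗ lTensor C (lTensor C γ) ∘ₗ
          (TensorProduct.assoc k C C N).toLinearMap
        = (TensorProduct.rid k (C ⊗[k] C)).toLinearMap ∘ₗ lTensor (C ⊗[k] C) γ := by
      apply TensorProduct.ext_threefold; intros; simp [smul_tmul', tmul_smul]
    have k2 : (TensorProduct.rid k (C ⊗[k] C)).toLinearMap ∘ₗ lTensor (C ⊗[k] C) γ ∘ₗ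
          rTensor N (Coalgebra.comul (R := k) (A := C))
        = Coalgebra.comul ∘ₗ (TensorProduct.rid k C).toLinearMap ∘ₗ lTensor C γ := by
      ext c m; simp [smul_tmul', tmul_smul]
    have e0 : G1 = ((TensorProduct.rid k C).toLinearMap ∘ₗ lTensor C γ) ∘ₗ ρl := by
      rw [hG1, comp_assoc]
    ext n
    have hco := LinearMap.congr_fun hlcoassoc n
    have hk1 := LinearMap.congr_fun k1
      (rTensor N (Coalgebra.comul (R := k) (A := C)) (ρl n))
    have hk2 := LinearMap.congr_fun k2 (ρl n)
    simp only [comp_apply] at hco hk1 hk2 ⊢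
    rw [e0]
    simp only [lTensor_comp, comp_apply]
    rw [← hco, hk1, hk2]
  have hg2 : Coalgebra.comul (R := k) (A := C) ∘ₗ G2 = rTensor C G2 ∘ₗ ρr := by
    have k3 : rTensor C (TensorProduct.lid k C).toLinearMap ∘ₗ rTensor C (rTensor C γ)
        = (TensorProduct.lid k (C ⊗[k] C)).toLinearMap ∘ₗ rTensor (C ⊗[k] C) γ ∘ₗ
            (TensorProduct.assoc k N C C).toLinearMap := by
      apply TensorProduct.ext_threefold; intros; simp [smul_tmul', tmul_smul]
    have k4 : (TensorProduct.lid k (C ⊗[k] C)).toLinearMap ∘ₗ rTensor (C ⊗[k] C) γ ∘ₗ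
          lTensor N (Coalgebra.comul (R := k) (A := C))
        = Coalgebra.comul ∘ₗ (TensorProduct.lid k C).toLinearMap ∘ₗ rTensor C γ := by
      ext m c; simp [smul_tmul', tmul_smul]
    have e0 : G2 = ((TensorProduct.lid k C).toLinearMap ∘ₗ rTensor C γ) ∘ₗ ρr := by
      rw [hG2, comp_assoc]
    ext n
    have hco := LinearMap.congr_fun hrcoassoc n
    have hk3 := LinearMap.congr_fun k3 (rTensor C ρr (ρr n))
    have hk4 := LinearMap.congr_fun k4 (ρr n)
    simp only [comp_apply] at hco hk3 hk4 ⊢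
    rw [e0]
    simp only [rTensor_comp, comp_apply]
    rw [hk3, hco, hk4]
  have hg3 : lTensor C G2 ∘ₗ ρl = rTensor C G1 ∘ₗ ρr := by
    have k5 : lTensor C (TensorProduct.lid k C).toLinearMap ∘ₗ lTensor C (rTensor C γ) ∘ₗ
          (TensorProduct.assoc k C N C).toLinearMap
        = rTensor C (TensorProduct.rid k C).toLinearMap ∘ₗ rTensor C (lTensor C γ) := by
      apply TensorProduct.ext_threefold; intros; simp [smul_tmul', tmul_smul]
    have e1 : G1 = ((TensorProduct.rid k C).toLinearMap ∘ₗ lTensor C γ) ∘ₗ ρl := by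
      rw [hG1, comp_assoc]
    have e2 : G2 = ((TensorProduct.lid k C).toLinearMap ∘ₗ rTensor C γ) ∘ₗ ρr := by
      rw [hG2, comp_assoc]
    ext n
    have hco := LinearMap.congr_fun hcompat n
    have hk5 := LinearMap.congr_fun k5 (rTensor C ρl (ρr n))
    simp only [comp_apply] at hco hk5 ⊢
    rw [e1, e2]
    simp only [lTensor_comp, rTensor_comp, comp_apply]
    rw [hco, hk5]
  constructor
  · rw [hβ', hε]
    simp only [comp_sub, comp_add, ← comp_assoc, hc1, hc2]
    abel
  · have hβinl : β ∘ₗ LinearMap.inl k C N = LinearMap.id := by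
      rw [hβ']
      simp only [add_comp, sub_comp, comp_assoc, fst_comp_inl, snd_comp_inl, comp_zero,
        sub_zero, add_zero]
    have hβinr : β ∘ₗ LinearMap.inr k C N = G2 - G1 := by
      rw [hβ']
      simp only [add_comp, sub_comp, comp_assoc, fst_comp_inr, snd_comp_inr, comp_id,
        zero_sub, neg_add_eq_sub]
    have mapid : TensorProduct.map LinearMap.id (G2 - G1) = lTensor C (G2 - G1) := rfl
    have mapid' : TensorProduct.map (G2 - G1) LinearMap.id = rTensor C (G2 - G1) := rfl
    rw [hΔ]
    simp only [comp_add, ← comp_assoc, ← TensorProduct.map_comp, hβinl, hβinr,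
      TensorProduct.map_id, id_comp, mapid, mapid', lTensor_sub, rTensor_sub, sub_comp]
    rw [hβ']
    simp only [comp_sub, comp_add, ← comp_assoc, ← hg1, ← hg2]
    rw [hg3]
    abel
end

section
/- Let φ: C → D be a coalgebra map satisfying Σ ε(aⁱ) bⁱ = Σ aⁱ ε(bⁱ) for all Σ aⁱ ⊗ bⁱ ∈ C □_D C. Then for every right C-comodule M, the map ν_M: M □_D C → M, ν_M(Σ mⁱ ⊗ cⁱ) = Σ mⁱ ε(cⁱ), is a morphism of right C-comodules, where M □_D C carries the right C-comodule structure Σ mⁱ ⊗ cⁱ ↦ Σ (mⁱ ⊗ cⁱ_{(1)}) ⊗ cⁱ_{(2)}. -/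
open TensorProduct LinearMap

section Aux

variable {R : Type*} [CommRing R] {M C D : Type*}
  [AddCommGroup M] [Module R M] [AddCommGroup C] [Module R C]
  [AddCommGroup D] [Module R D]

/-- L1 -/
lemma aux_L1 (ε : C →ₗ[R] R) (m : M) (w : C ⊗[R] C) :
    LinearMap.rTensor C ((TensorProduct.rid R M).toLinearMap ∘ₗ LinearMap.lTensor M ε)
      ((TensorProduct.assoc R M C C).symm (m ⊗ₜ[R] w))
    = m ⊗ₜ[R] (TensorProduct.lid R C) (LinearMap.rTensor C ε w) := by
  induction w using TensorProduct.induction_on with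
  | zero => simp
  | tmul a b =>
      simp only [TensorProduct.assoc_symm_tmul, rTensor_tmul, coe_comp,
        LinearEquiv.coe_coe, Function.comp_apply, lTensor_tmul, rid_tmul, lid_tmul]
      rw [TensorProduct.smul_tmul]
  | add u v hu hv => simp only [tmul_add, map_add, hu, hv]

/-- L2 -/
lemma aux_L2 (ε : C →ₗ[R] R) (t : M ⊗[R] C) (c : C) :
    LinearMap.lTensor M
      ((TensorProduct.lid R C).toLinearMap ∘ₗ LinearMap.rTensor C ε
        - (TensorProduct.rid R C).toLinearMap ∘ₗ LinearMap.lTensor C ε)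
      ((TensorProduct.assoc R M C C) (t ⊗ₜ[R] c))
    = ((TensorProduct.rid R M) (LinearMap.lTensor M ε t)) ⊗ₜ[R] c - ε c • t := by
  induction t using TensorProduct.induction_on with
  | zero => simp
  | tmul m a =>
      simp only [TensorProduct.assoc_tmul, lTensor_tmul, LinearMap.sub_apply, coe_comp,
        LinearEquiv.coe_coe, Function.comp_apply, rTensor_tmul, lid_tmul, rid_tmul,
        tmul_sub, tmul_smul, rid_tmul]
      rw [TensorProduct.smul_tmul']
  | add u v hu hv =>
      simp only [add_tmul, map_add, hu, hv, smul_add]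
      abel

/-- L3 -/
lemma aux_L3 (β : C →ₗ[R] D) (t : M ⊗[R] C) (c : C) :
    LinearMap.lTensor M (LinearMap.lTensor C β)
      ((TensorProduct.assoc R M C C) (t ⊗ₜ[R] c))
    = (TensorProduct.assoc R M C D) (LinearMap.lTensor (M ⊗[R] C) β (t ⊗ₜ[R] c)) := by
  induction t using TensorProduct.induction_on with
  | zero => simp
  | tmul m a => simp
  | add u v hu hv => simp only [add_tmul, map_add, hu, hv]

/-- L4 -/
lemma aux_L4 (f : C →ₗ[R] D) (c : C) (v : C ⊗[R] C) :
    (TensorProduct.assoc R C D C) ((LinearMap.lTensor C f v) ⊗ₜ[R] c)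
    = LinearMap.lTensor C (((TensorProduct.mk R D C).flip c) ∘ₗ f) v := by
  induction v using TensorProduct.induction_on with
  | zero => simp
  | tmul a b => simp
  | add u w hu hw => simp only [add_tmul, map_add, hu, hw]

/-- L5 -/
lemma aux_L5 (f : C →ₗ[R] D) (γ2 : C →ₗ[R] C ⊗[R] C) (t : M ⊗[R] C) (c : C) :
    LinearMap.lTensor M ((TensorProduct.assoc R C D C).toLinearMap ∘ₗ
        LinearMap.rTensor C (LinearMap.lTensor C f ∘ₗ γ2))
      ((TensorProduct.assoc R M C C) (t ⊗ₜ[R] c))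
    = LinearMap.lTensor M (LinearMap.lTensor C (((TensorProduct.mk R D C).flip c) ∘ₗ f))
        (LinearMap.lTensor M γ2 t) := by
  induction t using TensorProduct.induction_on with
  | zero => simp
  | tmul m a =>
      simp only [TensorProduct.assoc_tmul, lTensor_tmul, coe_comp, LinearEquiv.coe_coe,
        Function.comp_apply, rTensor_tmul]
      rw [aux_L4]
  | add u v hu hv => simp only [add_tmul, map_add, hu, hv]

/-- L6 -/
lemma aux_L6 (ρ : M →ₗ[R] M ⊗[R] C) (s : M ⊗[R] D) (c : C) :
    (TensorProduct.assoc R M C (D ⊗[R] C))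
      (LinearMap.rTensor (D ⊗[R] C) ρ ((TensorProduct.assoc R M D C) (s ⊗ₜ[R] c)))
    = (TensorProduct.assoc R M C (D ⊗[R] C))
        (LinearMap.lTensor (M ⊗[R] C) ((TensorProduct.mk R D C).flip c)
          (LinearMap.rTensor D ρ s)) := by
  induction s using TensorProduct.induction_on with
  | zero => simp
  | tmul m d => simp
  | add u v hu hv => simp only [add_tmul, map_add, hu, hv]

/-- L7 -/
lemma aux_L7 (f : C →ₗ[R] D) (u : M ⊗[R] C) (a c : C) :
    LinearMap.lTensor M (LinearMap.lTensor C (((TensorProduct.mk R D C).flip c) ∘ₗ f))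
      ((TensorProduct.assoc R M C C) (u ⊗ₜ[R] a))
    = (TensorProduct.assoc R M C (D ⊗[R] C))
        (LinearMap.lTensor (M ⊗[R] C) ((TensorProduct.mk R D C).flip c) (u ⊗ₜ[R] f a)) := by
  induction u using TensorProduct.induction_on with
  | zero => simp
  | tmul n b => simp
  | add u v hu hv => simp only [add_tmul, map_add, hu, hv]

/-- L8 -/
lemma aux_L8 (ρ : M →ₗ[R] M ⊗[R] C) (f : C →ₗ[R] D) (t : M ⊗[R] C) (c : C) :
    LinearMap.lTensor M (LinearMap.lTensor C (((TensorProduct.mk R D C).flip c) ∘ₗ f))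
      ((TensorProduct.assoc R M C C) (LinearMap.rTensor C ρ t))
    = (TensorProduct.assoc R M C (D ⊗[R] C))
        (LinearMap.lTensor (M ⊗[R] C) ((TensorProduct.mk R D C).flip c)
          (LinearMap.rTensor D ρ (LinearMap.lTensor M f t))) := by
  induction t using TensorProduct.induction_on with
  | zero => simp
  | tmul m a =>
      simp only [rTensor_tmul, lTensor_tmul]
      exact aux_L7 f (ρ m) a c
  | add u v hu hv => simp only [map_add, hu, hv]

end Aux

/-- Let `φ : C → D` be a coalgebra map satisfying
`Σ ε(aⁱ) bⁱ = Σ aⁱ ε(bⁱ)` on `C □_D C`. Then for every right `C`-comodule `M`,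
the map `ν_M : M □_D C → M`, `Σ mⁱ ⊗ cⁱ ↦ Σ mⁱ ε(cⁱ)`, is a morphism of right
`C`-comodules, where `M □_D C` has the coaction
`Σ mⁱ ⊗ cⁱ ↦ Σ (mⁱ ⊗ cⁱ₍₁₎) ⊗ cⁱ₍₂₎`. -/
theorem nu_is_comodule_map
    {k : Type*} [Field k]
    {C : Type*} [AddCommGroup C] [Module k C] [Coalgebra k C]
    {D : Type*} [AddCommGroup D] [Module k D] [Coalgebra k D]
    (φ : C →ₗc[k] D)
    -- the cotensor product C □_D C and the counit-symmetry hypothesis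
    (cotCC : Submodule k (C ⊗[k] C))
    (hcotCC : cotCC = LinearMap.ker
      ((TensorProduct.assoc k C D C).toLinearMap ∘ₗ
        (LinearMap.rTensor C ((LinearMap.lTensor C φ.toLinearMap) ∘ₗ
          Coalgebra.comul))
        - LinearMap.lTensor C ((LinearMap.rTensor C φ.toLinearMap) ∘ₗ
            Coalgebra.comul)))
    (hsymm : ∀ x ∈ cotCC,
      ((TensorProduct.lid k C).toLinearMap ∘ₗ
        LinearMap.rTensor C (Coalgebra.counit (R := k) (A := C))) x =
      ((TensorProduct.rid k C).toLinearMap ∘ₗ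
        LinearMap.lTensor C (Coalgebra.counit (R := k) (A := C))) x)
    -- a right C-comodule M
    {M : Type*} [AddCommGroup M] [Module k M]
    (ρM : M →ₗ[k] M ⊗[k] C)
    (hcounit : ∀ m : M, (TensorProduct.rid k M)
      ((LinearMap.lTensor M (Coalgebra.counit (R := k) (A := C))) (ρM m)) = m)
    (hcoassoc : (TensorProduct.assoc k M C C).toLinearMap ∘ₗ
        LinearMap.rTensor C ρM ∘ₗ ρM
      = LinearMap.lTensor M (Coalgebra.comul (R := k) (A := C)) ∘ₗ ρM)
    -- the cotensor product M □_D C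
    (cotMC : Submodule k (M ⊗[k] C))
    (hcotMC : cotMC = LinearMap.ker
      ((TensorProduct.assoc k M D C).toLinearMap ∘ₗ
        (LinearMap.rTensor C ((LinearMap.lTensor M φ.toLinearMap) ∘ₗ ρM))
        - LinearMap.lTensor M ((LinearMap.rTensor C φ.toLinearMap) ∘ₗ
            Coalgebra.comul)))
    -- the map ν_M(Σ mⁱ ⊗ cⁱ) = Σ mⁱ ε(cⁱ)
    (ν : M ⊗[k] C →ₗ[k] M)
    (hν : ν = (TensorProduct.rid k M).toLinearMap ∘ₗ
      LinearMap.lTensor M (Coalgebra.counit (R := k) (A := C)))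
    -- the right C-comodule structure on M □_D C
    (σ : M ⊗[k] C →ₗ[k] (M ⊗[k] C) ⊗[k] C)
    (hσ : σ = (TensorProduct.assoc k M C C).symm.toLinearMap ∘ₗ
      LinearMap.lTensor M (Coalgebra.comul (R := k) (A := C))) :
    -- ν_M is C-colinear on M □_D C
    ∀ x ∈ cotMC, ρM (ν x) = (LinearMap.rTensor C ν) (σ x) := by
  intro x hx
  set f : C →ₗ[k] D := φ.toLinearMap with hfdef
  set εC : C →ₗ[k] k := Coalgebra.counit (R := k) (A := C) with hεdef
  -- names for the structure maps
  set gA : C ⊗[k] C →ₗ[k] C ⊗[k] (D ⊗[k] C) :=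
    (TensorProduct.assoc k C D C).toLinearMap ∘ₗ
      LinearMap.rTensor C (LinearMap.lTensor C f ∘ₗ Coalgebra.comul) with hgA
  set gB : C ⊗[k] C →ₗ[k] C ⊗[k] (D ⊗[k] C) :=
    LinearMap.lTensor C (LinearMap.rTensor C f ∘ₗ Coalgebra.comul) with hgB
  set GA : M ⊗[k] C →ₗ[k] M ⊗[k] (D ⊗[k] C) :=
    (TensorProduct.assoc k M D C).toLinearMap ∘ₗ
      LinearMap.rTensor C (LinearMap.lTensor M f ∘ₗ ρM) with hGA
  set GB : M ⊗[k] C →ₗ[k] M ⊗[k] (D ⊗[k] C) :=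
    LinearMap.lTensor M (LinearMap.rTensor C f ∘ₗ Coalgebra.comul) with hGB
  set Fm : M ⊗[k] C →ₗ[k] M ⊗[k] (C ⊗[k] C) :=
    (TensorProduct.assoc k M C C).toLinearMap ∘ₗ LinearMap.rTensor C ρM with hFm
  set Hm : M ⊗[k] (D ⊗[k] C) →ₗ[k] M ⊗[k] (C ⊗[k] (D ⊗[k] C)) :=
    (TensorProduct.assoc k M C (D ⊗[k] C)).toLinearMap ∘ₗ
      LinearMap.rTensor (D ⊗[k] C) ρM with hHm
  set hm : C ⊗[k] C →ₗ[k] C :=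
    (TensorProduct.lid k C).toLinearMap ∘ₗ LinearMap.rTensor C εC
      - (TensorProduct.rid k C).toLinearMap ∘ₗ LinearMap.lTensor C εC with hhm
  -- x is in the kernel of GA - GB
  have hGx : (GA - GB) x = 0 := by
    rw [hcotMC] at hx
    exact LinearMap.mem_ker.mp hx
  -- coassociativity, pointwise
  have hco : ∀ m : M, LinearMap.lTensor M (Coalgebra.comul (R := k) (A := C)) (ρM m)
      = (TensorProduct.assoc k M C C) (LinearMap.rTensor C ρM (ρM m)) := by
    intro m
    have h1 := congrArg (fun p : M →ₗ[k] M ⊗[k] (C ⊗[k] C) => p m) hcoassoc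
    simpa using h1.symm
  -- Claim 1 : lTensor M (gA - gB) ∘ Fm = Hm ∘ (GA - GB)
  have claim1A : LinearMap.lTensor M gA ∘ₗ Fm = Hm ∘ₗ GA := by
    apply TensorProduct.ext'
    intro m c
    simp only [LinearMap.coe_comp, Function.comp_apply, hFm, hHm, hGA, hgA,
      LinearEquiv.coe_coe, LinearMap.rTensor_tmul]
    rw [aux_L5 f Coalgebra.comul (ρM m) c, hco m, aux_L8 ρM f (ρM m) c,
      aux_L6 ρM (LinearMap.lTensor M f (ρM m)) c]
  have claim1B : LinearMap.lTensor M gB ∘ₗ Fm = Hm ∘ₗ GB := by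
    apply TensorProduct.ext'
    intro m c
    simp only [LinearMap.coe_comp, Function.comp_apply, hFm, hHm, hGB, hgB,
      LinearEquiv.coe_coe, LinearMap.rTensor_tmul, LinearMap.lTensor_tmul]
    rw [aux_L3 (LinearMap.rTensor C f ∘ₗ Coalgebra.comul) (ρM m) c]
    simp only [LinearMap.lTensor_tmul, LinearMap.rTensor_tmul, LinearMap.coe_comp,
      Function.comp_apply]
  have claim1 : LinearMap.lTensor M (gA - gB) ∘ₗ Fm = Hm ∘ₗ (GA - GB) := by
    apply LinearMap.ext
    intro y
    have a1 := LinearMap.congr_fun claim1A y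
    have a2 := LinearMap.congr_fun claim1B y
    simp only [LinearMap.coe_comp, Function.comp_apply, LinearMap.sub_apply,
      LinearMap.lTensor_sub, map_sub, Pi.sub_apply] at a1 a2 ⊢
    show (LinearMap.lTensor M gA) (Fm y) - (LinearMap.lTensor M gB) (Fm y) = _
    rw [a1, a2]
  -- Claim 2 : lTensor M hm ∘ Fm = id - ρM ∘ ν
  have claim2 : LinearMap.lTensor M hm ∘ₗ Fm = LinearMap.id - ρM ∘ₗ ν := by
    apply TensorProduct.ext'
    intro m c
    simp only [LinearMap.coe_comp, Function.comp_apply, LinearMap.sub_apply,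
      hFm, LinearEquiv.coe_coe, LinearMap.rTensor_tmul, LinearMap.id_coe, id_eq]
    rw [hhm, aux_L2 εC (ρM m) c, hcounit m, hν]
    simp only [LinearMap.coe_comp, Function.comp_apply, LinearMap.lTensor_tmul,
      LinearEquiv.coe_coe, TensorProduct.rid_tmul, map_smul]
  -- hm vanishes on ker (gA - gB)
  have hker : ∀ y ∈ LinearMap.ker (gA - gB), hm y = 0 := by
    intro y hy
    have h2 := hsymm y (by rw [hcotCC]; exact hy)
    rw [hhm]
    simp only [LinearMap.sub_apply]
    rw [sub_eq_zero]
    exact h2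
  have hcomp0 : hm ∘ₗ (LinearMap.ker (gA - gB)).subtype = 0 := by
    ext y
    exact hker y y.2
  -- F x is killed by lTensor M (gA - gB)
  have hFx : LinearMap.lTensor M (gA - gB) (Fm x) = 0 := by
    rw [← LinearMap.comp_apply, claim1, LinearMap.comp_apply, hGx, map_zero]
  -- flatness: F x comes from M ⊗ ker (gA - gB)
  have hexact := Module.Flat.lTensor_exact (R := k) M
    (LinearMap.exact_subtype_ker_map (gA - gB))
  obtain ⟨w, hw⟩ := (hexact (Fm x)).mp hFx
  have hzero : LinearMap.lTensor M hm (Fm x) = 0 := by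
    rw [← hw, ← LinearMap.comp_apply, ← LinearMap.lTensor_comp, hcomp0,
      LinearMap.lTensor_zero, LinearMap.zero_apply]
  -- hence ρM (ν x) = x
  have hmain : ρM (ν x) = x := by
    have h3 := congrArg (fun p : M ⊗[k] C →ₗ[k] M ⊗[k] C => p x) claim2
    simp only [LinearMap.coe_comp, Function.comp_apply, LinearMap.sub_apply,
      LinearMap.id_coe, id_eq] at h3
    rw [hzero] at h3
    exact (sub_eq_zero.mp h3.symm).symm
  -- and rTensor ν (σ x) = x
  have hrhs : LinearMap.rTensor C ν (σ x) = x := by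
    have hid : LinearMap.rTensor C ν ∘ₗ σ = LinearMap.id := by
      apply TensorProduct.ext'
      intro m c
      simp only [LinearMap.coe_comp, Function.comp_apply, hσ, hν,
        LinearEquiv.coe_coe, LinearMap.lTensor_tmul, LinearMap.id_coe, id_eq]
      rw [aux_L1 εC m (Coalgebra.comul c), hεdef, Coalgebra.rTensor_counit_comul]
      simp
    have := congrArg (fun p : M ⊗[k] C →ₗ[k] M ⊗[k] C => p x) hid
    simpa using this
  rw [hmain, hrhs]
end

section
/- Let φ: C → D be a coalgebra map satisfying Σ ε(aⁱ) bⁱ = Σ aⁱ ε(bⁱ) for all Σ aⁱ ⊗ bⁱ ∈ C □_D C. Then for every right C-comodule M, the coaction ρ_M: M → M □_D C is bijective, with inverse ν_M(Σ mⁱ ⊗ cⁱ) = Σ mⁱ ε(cⁱ). In particular ρ_M ∘ ν_M = id on M □_D C. -/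
open TensorProduct LinearMap

private lemma factor_through' {k V W E : Type*} [Field k]
    [AddCommGroup V] [Module k V] [AddCommGroup W] [Module k W]
    [AddCommGroup E] [Module k E]
    (F : V →ₗ[k] W) (G : V →ₗ[k] E) (h : ker F ≤ ker G) :
    ∃ H : W →ₗ[k] E, G = H ∘ₗ F := by
  obtain ⟨l, hl⟩ := ((ker F).liftQ F le_rfl).exists_leftInverse_of_injective
    (Submodule.ker_liftQ_eq_bot _ _ _ le_rfl)
  refine ⟨(ker F).liftQ G h ∘ₗ l, LinearMap.ext fun x => ?_⟩
  have h1 : F x = (ker F).liftQ F le_rfl ((ker F).mkQ x) :=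
    (LinearMap.congr_fun (Submodule.liftQ_mkQ (ker F) F le_rfl) x).symm
  have h2 : l (((ker F).liftQ F le_rfl) ((ker F).mkQ x)) = (ker F).mkQ x :=
    LinearMap.congr_fun hl _
  simp only [comp_apply, h1, h2]
  exact (LinearMap.congr_fun (Submodule.liftQ_mkQ (ker F) G h) x).symm


/-- Let `φ : C → D` be a coalgebra map satisfying
`Σ ε(aⁱ) bⁱ = Σ aⁱ ε(bⁱ)` on `C □_D C`. Then for every right `C`-comodule `M`
the coaction `ρ_M : M → M □_D C` is bijective, with inverse
`ν_M(Σ mⁱ ⊗ cⁱ) = Σ mⁱ ε(cⁱ)`; in particular `ρ_M ∘ ν_M = id` on `M □_D C`. -/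
theorem coaction_bijective_of_counit_symm
    {k : Type*} [Field k]
    {C : Type*} [AddCommGroup C] [Module k C] [Coalgebra k C]
    {D : Type*} [AddCommGroup D] [Module k D] [Coalgebra k D]
    (φ : C →ₗc[k] D)
    (cotCC : Submodule k (C ⊗[k] C))
    (hcotCC : cotCC = LinearMap.ker
      ((TensorProduct.assoc k C D C).toLinearMap ∘ₗ
        (LinearMap.rTensor C ((LinearMap.lTensor C φ.toLinearMap) ∘ₗ
          Coalgebra.comul))
        - LinearMap.lTensor C ((LinearMap.rTensor C φ.toLinearMap) ∘ₗ
            Coalgebra.comul)))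
    (hsymm : ∀ x ∈ cotCC,
      ((TensorProduct.lid k C).toLinearMap ∘ₗ
        LinearMap.rTensor C (Coalgebra.counit (R := k) (A := C))) x =
      ((TensorProduct.rid k C).toLinearMap ∘ₗ
        LinearMap.lTensor C (Coalgebra.counit (R := k) (A := C))) x)
    {M : Type*} [AddCommGroup M] [Module k M]
    (ρM : M →ₗ[k] M ⊗[k] C)
    (hcounit : ∀ m : M, (TensorProduct.rid k M)
      ((LinearMap.lTensor M (Coalgebra.counit (R := k) (A := C))) (ρM m)) = m)
    (hcoassoc : (TensorProduct.assoc k M C C).toLinearMap ∘ₗ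
        LinearMap.rTensor C ρM ∘ₗ ρM
      = LinearMap.lTensor M (Coalgebra.comul (R := k) (A := C)) ∘ₗ ρM)
    (cotMC : Submodule k (M ⊗[k] C))
    (hcotMC : cotMC = LinearMap.ker
      ((TensorProduct.assoc k M D C).toLinearMap ∘ₗ
        (LinearMap.rTensor C ((LinearMap.lTensor M φ.toLinearMap) ∘ₗ ρM))
        - LinearMap.lTensor M ((LinearMap.rTensor C φ.toLinearMap) ∘ₗ
            Coalgebra.comul)))
    (ν : M ⊗[k] C →ₗ[k] M)
    (hν : ν = (TensorProduct.rid k M).toLinearMap ∘ₗ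
      LinearMap.lTensor M (Coalgebra.counit (R := k) (A := C))) :
    -- ρ_M lands in M □_D C, ν ∘ ρ_M = id on M, and ρ_M ∘ ν = id on M □_D C,
    -- i.e. ρ_M : M → M □_D C is bijective with inverse ν
    (∀ m : M, ρM m ∈ cotMC)
    ∧ (∀ m : M, ν (ρM m) = m)
    ∧ (∀ x ∈ cotMC, ρM (ν x) = x) := by
  subst hcotCC hcotMC hν
  set ε : C →ₗ[k] k := Coalgebra.counit (R := k) (A := C) with hε
  set Δ : C →ₗ[k] C ⊗[k] C := Coalgebra.comul (R := k) (A := C) with hΔ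
  set ν : M ⊗[k] C →ₗ[k] M :=
    (TensorProduct.rid k M).toLinearMap ∘ₗ lTensor M ε with hνdef
  -- E1
  have E1 : (TensorProduct.assoc k M D C).toLinearMap ∘ₗ
      rTensor C (lTensor M φ.toLinearMap)
      = lTensor M (rTensor C φ.toLinearMap) ∘ₗ
        (TensorProduct.assoc k M C C).toLinearMap := by
    apply TensorProduct.ext_threefold
    intro m c c'
    simp
  have part1 : ∀ m : M, ρM m ∈ LinearMap.ker
      ((TensorProduct.assoc k M D C).toLinearMap ∘ₗ
        (LinearMap.rTensor C ((LinearMap.lTensor M φ.toLinearMap) ∘ₗ ρM))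
        - LinearMap.lTensor M ((LinearMap.rTensor C φ.toLinearMap) ∘ₗ Δ)) := by
    intro m
    rw [LinearMap.mem_ker, LinearMap.sub_apply, sub_eq_zero]
    have h1 : rTensor C (lTensor M φ.toLinearMap ∘ₗ ρM) (ρM m)
        = rTensor C (lTensor M φ.toLinearMap) (rTensor C ρM (ρM m)) := by
      rw [rTensor_comp]; rfl
    have h2 : (TensorProduct.assoc k M C C).toLinearMap (rTensor C ρM (ρM m))
        = lTensor M Δ (ρM m) := LinearMap.congr_fun hcoassoc m
    calc (TensorProduct.assoc k M D C).toLinearMap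
          (rTensor C (lTensor M φ.toLinearMap ∘ₗ ρM) (ρM m))
        = ((TensorProduct.assoc k M D C).toLinearMap ∘ₗ
            rTensor C (lTensor M φ.toLinearMap)) (rTensor C ρM (ρM m)) := by
          rw [h1]; rfl
      _ = lTensor M (rTensor C φ.toLinearMap)
            ((TensorProduct.assoc k M C C).toLinearMap (rTensor C ρM (ρM m))) := by
          rw [E1]; rfl
      _ = lTensor M (rTensor C φ.toLinearMap) (lTensor M Δ (ρM m)) := by rw [h2]
      _ = lTensor M (rTensor C φ.toLinearMap ∘ₗ Δ) (ρM m) := by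
          rw [lTensor_comp]; rfl
  have part2 : ∀ m : M, ν (ρM m) = m := by
    intro m
    exact hcounit m
  refine ⟨part1, part2, ?_⟩
  intro x hx
  rw [LinearMap.mem_ker] at hx
  -- the C-level maps
  set F : C ⊗[k] C →ₗ[k] C ⊗[k] (D ⊗[k] C) :=
    (TensorProduct.assoc k C D C).toLinearMap ∘ₗ
      (rTensor C ((lTensor C φ.toLinearMap) ∘ₗ Δ))
      - lTensor C ((rTensor C φ.toLinearMap) ∘ₗ Δ) with hF
  set G1 : C ⊗[k] C →ₗ[k] C :=
    (TensorProduct.lid k C).toLinearMap ∘ₗ rTensor C ε with hG1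
  set G2 : C ⊗[k] C →ₗ[k] C :=
    (TensorProduct.rid k C).toLinearMap ∘ₗ lTensor C ε with hG2
  have hker : ker F ≤ ker (G1 - G2) := by
    intro z hz
    rw [LinearMap.mem_ker, LinearMap.sub_apply, sub_eq_zero]
    exact hsymm z hz
  obtain ⟨H, hH⟩ := factor_through' F (G1 - G2) hker
  set y : M ⊗[k] (C ⊗[k] C) :=
    (TensorProduct.assoc k M C C).toLinearMap (rTensor C ρM x) with hy
  -- key claim: lTensor M F y = 0
  set Ψ : M ⊗[k] (D ⊗[k] C) →ₗ[k] M ⊗[k] (C ⊗[k] (D ⊗[k] C)) :=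
    (TensorProduct.assoc k M C (D ⊗[k] C)).toLinearMap ∘ₗ rTensor (D ⊗[k] C) ρM
    with hΨ
  set f : C →ₗ[k] C ⊗[k] D := lTensor C φ.toLinearMap ∘ₗ Δ with hf
  set g : C →ₗ[k] D ⊗[k] C := rTensor C φ.toLinearMap ∘ₗ Δ with hg
  set W : M →ₗ[k] (M ⊗[k] C) ⊗[k] C := rTensor C ρM ∘ₗ ρM with hW
  -- E3a
  have E3a : lTensor M ((TensorProduct.assoc k C D C).toLinearMap ∘ₗ rTensor C f)
      ∘ₗ (TensorProduct.assoc k M C C).toLinearMap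
      = lTensor M (TensorProduct.assoc k C D C).toLinearMap ∘ₗ
        (TensorProduct.assoc k M (C ⊗[k] D) C).toLinearMap ∘ₗ
        rTensor C (lTensor M f) := by
    apply TensorProduct.ext_threefold
    intro m c c'
    simp
  -- E3c
  have E3c : lTensor M (lTensor C φ.toLinearMap) ∘ₗ
      (TensorProduct.assoc k M C C).toLinearMap
      = (TensorProduct.assoc k M C D).toLinearMap ∘ₗ
        lTensor (M ⊗[k] C) φ.toLinearMap := by
    apply TensorProduct.ext_threefold
    intro m c c'
    simp
  -- E3b : lTensor M f ∘ₗ ρM factored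
  have E3b : lTensor M f ∘ₗ ρM
      = (TensorProduct.assoc k M C D).toLinearMap ∘ₗ
        lTensor (M ⊗[k] C) φ.toLinearMap ∘ₗ W := by
    rw [hf, lTensor_comp, comp_assoc, ← hcoassoc]
    rw [← comp_assoc (rTensor C ρM ∘ₗ ρM), ← comp_assoc, E3c, hW]
    rw [comp_assoc, comp_assoc]
  -- E5
  have E5 : lTensor M (TensorProduct.assoc k C D C).toLinearMap ∘ₗ
      (TensorProduct.assoc k M (C ⊗[k] D) C).toLinearMap ∘ₗ
      rTensor C (TensorProduct.assoc k M C D).toLinearMap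
      = (TensorProduct.assoc k M C (D ⊗[k] C)).toLinearMap ∘ₗ
        (TensorProduct.assoc k (M ⊗[k] C) D C).toLinearMap := by
    apply TensorProduct.ext_fourfold
    intro m c d c'
    simp
  -- E4a
  have E4a : rTensor (D ⊗[k] C) ρM ∘ₗ (TensorProduct.assoc k M D C).toLinearMap
      = (TensorProduct.assoc k (M ⊗[k] C) D C).toLinearMap ∘ₗ
        rTensor C (rTensor D ρM) := by
    apply TensorProduct.ext_threefold
    intro m d c
    simp
  -- E4b
  have E4b : rTensor D ρM ∘ₗ lTensor M φ.toLinearMap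
      = lTensor (M ⊗[k] C) φ.toLinearMap ∘ₗ rTensor C ρM := by
    apply TensorProduct.ext'
    intro m c
    simp
  -- key1 : lTensor M (A') y = Psi (first part of cotensor map at x)
  set z0 : (M ⊗[k] C) ⊗[k] C := rTensor C ρM x with hz0
  set z1 : ((M ⊗[k] C) ⊗[k] C) ⊗[k] C := rTensor C W x with hz1
  have key1 : lTensor M ((TensorProduct.assoc k C D C).toLinearMap ∘ₗ rTensor C f) y
      = Ψ ((TensorProduct.assoc k M D C).toLinearMap
          (rTensor C (lTensor M φ.toLinearMap ∘ₗ ρM) x)) := by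
    have L1 : lTensor M ((TensorProduct.assoc k C D C).toLinearMap ∘ₗ rTensor C f) y
        = lTensor M (TensorProduct.assoc k C D C).toLinearMap
            ((TensorProduct.assoc k M (C ⊗[k] D) C).toLinearMap
              (rTensor C (lTensor M f) z0)) := by
      have := LinearMap.congr_fun E3a z0
      simp only [comp_apply] at this
      rw [hy, this]
    have L2 : rTensor C (lTensor M f) z0
        = rTensor C (TensorProduct.assoc k M C D).toLinearMap
            (rTensor C (lTensor (M ⊗[k] C) φ.toLinearMap) z1) := by
      have h1 : rTensor C (lTensor M f) z0 = rTensor C (lTensor M f ∘ₗ ρM) x := by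
        rw [rTensor_comp, hz0]; rfl
      have h2 : rTensor C ((TensorProduct.assoc k M C D).toLinearMap ∘ₗ
          lTensor (M ⊗[k] C) φ.toLinearMap ∘ₗ W) x
          = rTensor C (TensorProduct.assoc k M C D).toLinearMap
              (rTensor C (lTensor (M ⊗[k] C) φ.toLinearMap) z1) := by
        rw [rTensor_comp, rTensor_comp, hz1]; rfl
      rw [h1, E3b, h2]
    have L3 := LinearMap.congr_fun E5
      (rTensor C (lTensor (M ⊗[k] C) φ.toLinearMap) z1)
    simp only [comp_apply] at L3
    have R1 : rTensor C (lTensor M φ.toLinearMap ∘ₗ ρM) x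
        = rTensor C (lTensor M φ.toLinearMap) z0 := by
      rw [rTensor_comp, hz0]; rfl
    have R3 := LinearMap.congr_fun E4a (rTensor C (lTensor M φ.toLinearMap) z0)
    simp only [comp_apply] at R3
    have R4 : rTensor C (rTensor D ρM) (rTensor C (lTensor M φ.toLinearMap) z0)
        = rTensor C (lTensor (M ⊗[k] C) φ.toLinearMap) z1 := by
      have h1 : rTensor C (rTensor D ρM) (rTensor C (lTensor M φ.toLinearMap) z0)
          = rTensor C ((rTensor D ρM ∘ₗ lTensor M φ.toLinearMap) ∘ₗ ρM) x := by
        rw [rTensor_comp, rTensor_comp, hz0]; rfl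
      rw [h1, E4b, comp_assoc, ← hW, rTensor_comp, hz1]; rfl
    rw [L1, L2, L3, R1]
    rw [hΨ, comp_apply, R3, R4]
  -- key2
  have E2a : lTensor M (lTensor C g) ∘ₗ (TensorProduct.assoc k M C C).toLinearMap
      = (TensorProduct.assoc k M C (D ⊗[k] C)).toLinearMap ∘ₗ
        lTensor (M ⊗[k] C) g := by
    apply TensorProduct.ext_threefold
    intro m c c'
    simp
  have E2b : lTensor (M ⊗[k] C) g ∘ₗ rTensor C ρM
      = rTensor (D ⊗[k] C) ρM ∘ₗ lTensor M g := by
    apply TensorProduct.ext'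
    intro m c
    simp
  have key2 : lTensor M (lTensor C g) y = Ψ (lTensor M g x) := by
    have c1 := LinearMap.congr_fun E2a z0
    simp only [comp_apply] at c1
    have c2 := LinearMap.congr_fun E2b x
    simp only [comp_apply] at c2
    rw [hy, c1, hz0, c2, hΨ]; rfl
  have hFy : lTensor M F y = 0 := by
    have hsplit : lTensor M F y
        = lTensor M ((TensorProduct.assoc k C D C).toLinearMap ∘ₗ rTensor C f) y
          - lTensor M (lTensor C g) y := by
      rw [hF, lTensor_sub]; rfl
    rw [hsplit, key1, key2]
    have hxz : (TensorProduct.assoc k M D C).toLinearMap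
        (rTensor C (lTensor M φ.toLinearMap ∘ₗ ρM) x) = lTensor M g x := by
      have h := hx
      simp only [LinearMap.sub_apply, comp_apply] at h
      exact sub_eq_zero.mp h
    rw [hxz, sub_self]
  -- now use factorization
  have hGy : lTensor M (G1 - G2) y = 0 := by
    rw [hH, lTensor_comp, comp_apply, hFy, map_zero]
  have hG12 : lTensor M G1 y = lTensor M G2 y := by
    rw [lTensor_sub] at hGy
    exact sub_eq_zero.mp hGy
  -- lTensor M G1 y = x
  have E6 : lTensor M G1 ∘ₗ (TensorProduct.assoc k M C C).toLinearMap
      = rTensor C ν := by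
    apply TensorProduct.ext_threefold
    intro m c c'
    simp [hG1, hνdef, smul_tmul]
  have hνρ : ν ∘ₗ ρM = LinearMap.id := LinearMap.ext part2
  have hx1 : lTensor M G1 y = x := by
    rw [hy, ← comp_apply, E6, hz0, ← comp_apply, ← rTensor_comp, hνρ, rTensor_id]
    rfl
  -- lTensor M G2 y = ρM (ν x)
  have E7 : lTensor M G2 ∘ₗ (TensorProduct.assoc k M C C).toLinearMap
      = (TensorProduct.rid k (M ⊗[k] C)).toLinearMap ∘ₗ lTensor (M ⊗[k] C) ε := by
    apply TensorProduct.ext_threefold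
    intro m c c'
    simp [hG2, smul_tmul]
  have E8 : (TensorProduct.rid k (M ⊗[k] C)).toLinearMap ∘ₗ
      lTensor (M ⊗[k] C) ε ∘ₗ rTensor C ρM = ρM ∘ₗ ν := by
    apply TensorProduct.ext'
    intro m c
    simp [hνdef]
  have hx2 : lTensor M G2 y = ρM (ν x) := by
    rw [hy, ← comp_apply, E7, hz0, ← comp_apply, comp_assoc, E8]
    rfl
  rw [← hx2, ← hG12, hx1]
end

section
/- Let φ: C → D be a coalgebra map. If Σ ε(aⁱ) bⁱ = Σ aⁱ ε(bⁱ) for all Σ aⁱ ⊗ bⁱ ∈ C □_D C, then the map Δ_C: C → C □_D C is surjective (hence bijective). -/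
open TensorProduct LinearMap

set_option linter.unusedSectionVars false
set_option maxHeartbeats 1000000

section AuxCotensor

variable {k : Type*} [Field k]
    {C : Type*} [AddCommGroup C] [Module k C] [Coalgebra k C]
    {D : Type*} [AddCommGroup D] [Module k D] [Coalgebra k D]

/-- Over a field, if `ker L ≤ ker S` then `S` factors through `L`. -/
lemma aux_factor_through_of_ker_le_ker {V W U : Type*}
    [AddCommGroup V] [Module k V] [AddCommGroup W] [Module k W]
    [AddCommGroup U] [Module k U]
    (L : V →ₗ[k] W) (S : V →ₗ[k] U) (h : LinearMap.ker L ≤ LinearMap.ker S) :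
    ∃ T : W →ₗ[k] U, S = T ∘ₗ L := by
  set Lbar : (V ⧸ LinearMap.ker L) →ₗ[k] W := (LinearMap.ker L).liftQ L le_rfl with hLbar
  have hinj : LinearMap.ker Lbar = ⊥ := Submodule.ker_liftQ_eq_bot _ _ _ le_rfl
  obtain ⟨g, hg⟩ := Lbar.exists_leftInverse_of_injective hinj
  refine ⟨(LinearMap.ker L).liftQ S h ∘ₗ g, ?_⟩
  ext v
  have h1 : Lbar ((LinearMap.ker L).mkQ v) = L v := rfl
  have h2 : g (Lbar ((LinearMap.ker L).mkQ v)) = (LinearMap.ker L).mkQ v :=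
    congrFun (congrArg DFunLike.coe hg) _
  simp only [coe_comp, Function.comp_apply, ← h1, h2]
  rfl

/-- `Σ a₁ ⊗ ρr(a₂) = assoc (Σ (Δa₁) ⊗ φ(a₂))` for `ρr = (id ⊗ φ)Δ`. -/
lemma aux_dagger (φ : C →ₗ[k] D) (a : C) :
    LinearMap.lTensor C (LinearMap.lTensor C φ ∘ₗ Coalgebra.comul)
        (Coalgebra.comul (R := k) a) =
    (TensorProduct.assoc k C C D)
      (LinearMap.rTensor D (Coalgebra.comul (R := k))
        (LinearMap.lTensor C φ (Coalgebra.comul a))) := by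
  have nat1 : ∀ y : C ⊗[k] C,
      LinearMap.rTensor D (Coalgebra.comul (R := k) (A := C))
          (LinearMap.lTensor C φ y) =
        LinearMap.lTensor (C ⊗[k] C) φ (LinearMap.rTensor C Coalgebra.comul y) := by
    intro y
    have h : LinearMap.rTensor D (Coalgebra.comul (R := k) (A := C)) ∘ₗ
        LinearMap.lTensor C φ =
        LinearMap.lTensor (C ⊗[k] C) φ ∘ₗ LinearMap.rTensor C Coalgebra.comul := by
      ext a b; simp
    simpa only [LinearMap.comp_apply] using LinearMap.congr_fun h y
  have nat2 : ∀ y : (C ⊗[k] C) ⊗[k] C,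
      (TensorProduct.assoc k C C D) (LinearMap.lTensor (C ⊗[k] C) φ y) =
        LinearMap.lTensor C (LinearMap.lTensor C φ)
          ((TensorProduct.assoc k C C C) y) := by
    intro y
    have h : (TensorProduct.assoc k C C D).toLinearMap ∘ₗ
        LinearMap.lTensor (C ⊗[k] C) φ =
        LinearMap.lTensor C (LinearMap.lTensor C φ) ∘ₗ
          (TensorProduct.assoc k C C C).toLinearMap := by
      ext a b c; simp
    simpa only [LinearMap.comp_apply, LinearEquiv.coe_coe] using LinearMap.congr_fun h y
  rw [nat1, nat2, Coalgebra.coassoc_apply, LinearMap.lTensor_comp,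
    LinearMap.comp_apply]

/-- Part 1 pointwise: the comultiplication lands in the cotensor product. -/
lemma aux_part1 (φ : C →ₗ[k] D) (c : C) :
    (TensorProduct.assoc k C D C)
        (LinearMap.rTensor C (LinearMap.lTensor C φ ∘ₗ Coalgebra.comul)
          (Coalgebra.comul (R := k) c)) =
    LinearMap.lTensor C (LinearMap.rTensor C φ ∘ₗ Coalgebra.comul)
      (Coalgebra.comul (R := k) c) := by
  have nat : ∀ y : (C ⊗[k] C) ⊗[k] C,
      (TensorProduct.assoc k C D C)
          (LinearMap.rTensor C (LinearMap.lTensor C φ) y) =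
        LinearMap.lTensor C (LinearMap.rTensor C φ)
          ((TensorProduct.assoc k C C C) y) := by
    intro y
    have h : (TensorProduct.assoc k C D C).toLinearMap ∘ₗ
        LinearMap.rTensor C (LinearMap.lTensor C φ) =
        LinearMap.lTensor C (LinearMap.rTensor C φ) ∘ₗ
          (TensorProduct.assoc k C C C).toLinearMap := by
      ext a b c; simp
    simpa only [LinearMap.comp_apply, LinearEquiv.coe_coe] using LinearMap.congr_fun h y
  rw [LinearMap.rTensor_comp, LinearMap.comp_apply, nat,
    Coalgebra.coassoc_apply, LinearMap.lTensor_comp, LinearMap.comp_apply]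

lemma aux_EqR (φ : C →ₗ[k] D)
    (ρr : C →ₗ[k] C ⊗[k] D) (hρr : ρr = LinearMap.lTensor C φ ∘ₗ Coalgebra.comul) :
    LinearMap.lTensor C
        ((TensorProduct.assoc k C D C).toLinearMap ∘ₗ LinearMap.rTensor C ρr) ∘ₗ
      (TensorProduct.assoc k C C C).toLinearMap ∘ₗ
        LinearMap.rTensor C (Coalgebra.comul (R := k)) =
    (TensorProduct.assoc k C C (D ⊗[k] C)).toLinearMap ∘ₗ
      LinearMap.rTensor (D ⊗[k] C) (Coalgebra.comul (R := k)) ∘ₗ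
        ((TensorProduct.assoc k C D C).toLinearMap ∘ₗ LinearMap.rTensor C ρr) := by
  have natA : ∀ (y : C ⊗[k] C) (b : C),
      LinearMap.lTensor C (LinearMap.rTensor C ρr)
          ((TensorProduct.assoc k C C C) (y ⊗ₜ[k] b)) =
        (TensorProduct.assoc k C (C ⊗[k] D) C)
          ((LinearMap.lTensor C ρr y) ⊗ₜ[k] b) := by
    intro y b
    have h : LinearMap.lTensor C (LinearMap.rTensor C ρr) ∘ₗ
        (TensorProduct.assoc k C C C).toLinearMap =
        (TensorProduct.assoc k C (C ⊗[k] D) C).toLinearMap ∘ₗ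
          LinearMap.rTensor C (LinearMap.lTensor C ρr) := by
      ext a b c; simp
    simpa only [LinearMap.comp_apply, LinearEquiv.coe_coe,
      LinearMap.rTensor_tmul] using LinearMap.congr_fun h (y ⊗ₜ[k] b)
  have pentagon : ∀ (z : (C ⊗[k] C) ⊗[k] D) (b : C),
      LinearMap.lTensor C (TensorProduct.assoc k C D C).toLinearMap
          ((TensorProduct.assoc k C (C ⊗[k] D) C)
            (((TensorProduct.assoc k C C D) z) ⊗ₜ[k] b)) =
        (TensorProduct.assoc k C C (D ⊗[k] C))
          ((TensorProduct.assoc k (C ⊗[k] C) D C) (z ⊗ₜ[k] b)) := by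
    intro z b
    have h : LinearMap.lTensor C (TensorProduct.assoc k C D C).toLinearMap ∘ₗ
        (TensorProduct.assoc k C (C ⊗[k] D) C).toLinearMap ∘ₗ
          LinearMap.rTensor C (TensorProduct.assoc k C C D).toLinearMap =
        (TensorProduct.assoc k C C (D ⊗[k] C)).toLinearMap ∘ₗ
          (TensorProduct.assoc k (C ⊗[k] C) D C).toLinearMap := by
      ext a b c d; simp
    simpa only [LinearMap.comp_apply, LinearEquiv.coe_coe,
      LinearMap.rTensor_tmul] using LinearMap.congr_fun h (z ⊗ₜ[k] b)
  have natB : ∀ (w : C ⊗[k] D) (b : C),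
      LinearMap.rTensor (D ⊗[k] C) (Coalgebra.comul (R := k) (A := C))
          ((TensorProduct.assoc k C D C) (w ⊗ₜ[k] b)) =
        (TensorProduct.assoc k (C ⊗[k] C) D C)
          ((LinearMap.rTensor D (Coalgebra.comul (R := k)) w) ⊗ₜ[k] b) := by
    intro w b
    have h : LinearMap.rTensor (D ⊗[k] C) (Coalgebra.comul (R := k) (A := C)) ∘ₗ
        (TensorProduct.assoc k C D C).toLinearMap =
        (TensorProduct.assoc k (C ⊗[k] C) D C).toLinearMap ∘ₗ
          LinearMap.rTensor C (LinearMap.rTensor D (Coalgebra.comul (R := k))) := by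
      ext a b c; simp
    simpa only [LinearMap.comp_apply, LinearEquiv.coe_coe,
      LinearMap.rTensor_tmul] using LinearMap.congr_fun h (w ⊗ₜ[k] b)
  ext a b
  have hdag : LinearMap.lTensor C ρr (Coalgebra.comul a) =
      (TensorProduct.assoc k C C D)
        (LinearMap.rTensor D (Coalgebra.comul (R := k)) (ρr a)) := by
    rw [hρr]; simpa using aux_dagger φ a
  simp only [TensorProduct.AlgebraTensorModule.curry_apply, TensorProduct.curry_apply,
    LinearMap.coe_restrictScalars, LinearMap.coe_comp, Function.comp_apply,
    LinearEquiv.coe_coe, LinearMap.rTensor_tmul]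
  rw [LinearMap.lTensor_comp, LinearMap.comp_apply, natA, hdag, pentagon, natB]

lemma aux_EqL (ρl : C →ₗ[k] D ⊗[k] C) :
    LinearMap.lTensor C (LinearMap.lTensor C ρl) ∘ₗ
      (TensorProduct.assoc k C C C).toLinearMap ∘ₗ
        LinearMap.rTensor C (Coalgebra.comul (R := k)) =
    (TensorProduct.assoc k C C (D ⊗[k] C)).toLinearMap ∘ₗ
      LinearMap.rTensor (D ⊗[k] C) (Coalgebra.comul (R := k)) ∘ₗ
        LinearMap.lTensor C ρl := by
  have natL : ∀ (y : C ⊗[k] C) (b : C),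
      LinearMap.lTensor C (LinearMap.lTensor C ρl)
          ((TensorProduct.assoc k C C C) (y ⊗ₜ[k] b)) =
        (TensorProduct.assoc k C C (D ⊗[k] C)) (y ⊗ₜ[k] (ρl b)) := by
    intro y b
    have h : LinearMap.lTensor C (LinearMap.lTensor C ρl) ∘ₗ
        (TensorProduct.assoc k C C C).toLinearMap =
        (TensorProduct.assoc k C C (D ⊗[k] C)).toLinearMap ∘ₗ
          LinearMap.lTensor (C ⊗[k] C) ρl := by
      ext a b c; simp
    simpa only [LinearMap.comp_apply, LinearEquiv.coe_coe,
      LinearMap.lTensor_tmul] using LinearMap.congr_fun h (y ⊗ₜ[k] b)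
  ext a b
  simp only [TensorProduct.AlgebraTensorModule.curry_apply, TensorProduct.curry_apply,
    LinearMap.coe_restrictScalars, LinearMap.coe_comp, Function.comp_apply,
    LinearEquiv.coe_coe, LinearMap.rTensor_tmul, LinearMap.lTensor_tmul]
  rw [natL]

lemma aux_B1 :
    LinearMap.lTensor C ((TensorProduct.lid k C).toLinearMap ∘ₗ
        LinearMap.rTensor C (Coalgebra.counit (R := k))) ∘ₗ
      (TensorProduct.assoc k C C C).toLinearMap ∘ₗ
        LinearMap.rTensor C (Coalgebra.comul (R := k)) =
    LinearMap.id := by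
  have natC : ∀ (y : C ⊗[k] C) (b : C),
      LinearMap.lTensor C ((TensorProduct.lid k C).toLinearMap ∘ₗ
          LinearMap.rTensor C (Coalgebra.counit (R := k)))
          ((TensorProduct.assoc k C C C) (y ⊗ₜ[k] b)) =
        LinearMap.rTensor C (TensorProduct.rid k C).toLinearMap
          ((LinearMap.lTensor C (Coalgebra.counit (R := k)) y) ⊗ₜ[k] b) := by
    intro y b
    have h : LinearMap.lTensor C ((TensorProduct.lid k C).toLinearMap ∘ₗ
        LinearMap.rTensor C (Coalgebra.counit (R := k))) ∘ₗ
        (TensorProduct.assoc k C C C).toLinearMap =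
        LinearMap.rTensor C (TensorProduct.rid k C).toLinearMap ∘ₗ
          LinearMap.rTensor C (LinearMap.lTensor C (Coalgebra.counit (R := k))) := by
      ext a b c
      simp [TensorProduct.smul_tmul]
    simpa only [LinearMap.comp_apply, LinearEquiv.coe_coe,
      LinearMap.rTensor_tmul] using LinearMap.congr_fun h (y ⊗ₜ[k] b)
  ext a b
  simp only [TensorProduct.AlgebraTensorModule.curry_apply, TensorProduct.curry_apply,
    LinearMap.coe_restrictScalars, LinearMap.coe_comp, Function.comp_apply,
    LinearEquiv.coe_coe, LinearMap.rTensor_tmul, LinearMap.id_coe, id_eq]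
  rw [natC, Coalgebra.lTensor_counit_comul]
  simp

lemma aux_B2 :
    LinearMap.lTensor C ((TensorProduct.rid k C).toLinearMap ∘ₗ
        LinearMap.lTensor C (Coalgebra.counit (R := k))) ∘ₗ
      (TensorProduct.assoc k C C C).toLinearMap ∘ₗ
        LinearMap.rTensor C (Coalgebra.comul (R := k)) =
    Coalgebra.comul ∘ₗ (TensorProduct.rid k C).toLinearMap ∘ₗ
      LinearMap.lTensor C (Coalgebra.counit (R := k)) := by
  have natD : ∀ (y : C ⊗[k] C) (b : C),
      LinearMap.lTensor C ((TensorProduct.rid k C).toLinearMap ∘ₗ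
          LinearMap.lTensor C (Coalgebra.counit (R := k)))
          ((TensorProduct.assoc k C C C) (y ⊗ₜ[k] b)) =
        (TensorProduct.rid k (C ⊗[k] C))
          (LinearMap.lTensor (C ⊗[k] C) (Coalgebra.counit (R := k)) (y ⊗ₜ[k] b)) := by
    intro y b
    have h : LinearMap.lTensor C ((TensorProduct.rid k C).toLinearMap ∘ₗ
        LinearMap.lTensor C (Coalgebra.counit (R := k))) ∘ₗ
        (TensorProduct.assoc k C C C).toLinearMap =
        (TensorProduct.rid k (C ⊗[k] C)).toLinearMap ∘ₗ
          LinearMap.lTensor (C ⊗[k] C) (Coalgebra.counit (R := k)) := by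
      ext a b c
      simp [TensorProduct.smul_tmul]
    simpa only [LinearMap.comp_apply, LinearEquiv.coe_coe] using
      LinearMap.congr_fun h (y ⊗ₜ[k] b)
  ext a b
  simp only [TensorProduct.AlgebraTensorModule.curry_apply, TensorProduct.curry_apply,
    LinearMap.coe_restrictScalars, LinearMap.coe_comp, Function.comp_apply,
    LinearEquiv.coe_coe, LinearMap.rTensor_tmul, LinearMap.lTensor_tmul]
  rw [natD]
  simp [LinearMap.lTensor_tmul]

end AuxCotensor

/-- If `Σ ε(aⁱ) bⁱ = Σ aⁱ ε(bⁱ)` for all `Σ aⁱ ⊗ bⁱ ∈ C □_D C`,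
then `Δ_C : C → C □_D C` is surjective (it lands in `C □_D C` since `φ` is a
coalgebra map, and every element of `C □_D C` is of the form `Δ_C c`). -/
theorem comul_surjective_onto_cotensor_of_counit_symm
    {k : Type*} [Field k]
    {C : Type*} [AddCommGroup C] [Module k C] [Coalgebra k C]
    {D : Type*} [AddCommGroup D] [Module k D] [Coalgebra k D]
    (φ : C →ₗc[k] D)
    (ρr : C →ₗ[k] C ⊗[k] D)
    (hρr : ρr = (LinearMap.lTensor C φ.toLinearMap) ∘ₗ Coalgebra.comul)
    (ρl : C →ₗ[k] D ⊗[k] C)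
    (hρl : ρl = (LinearMap.rTensor C φ.toLinearMap) ∘ₗ Coalgebra.comul)
    (cot : Submodule k (C ⊗[k] C))
    (hcot : cot = LinearMap.ker
      ((TensorProduct.assoc k C D C).toLinearMap ∘ₗ (LinearMap.rTensor C ρr)
        - LinearMap.lTensor C ρl))
    -- hypothesis: Σ ε(aⁱ) bⁱ = Σ aⁱ ε(bⁱ) on C □_D C
    (hsymm : ∀ x ∈ cot,
      ((TensorProduct.lid k C).toLinearMap ∘ₗ
        LinearMap.rTensor C (Coalgebra.counit (R := k) (A := C))) x =
      ((TensorProduct.rid k C).toLinearMap ∘ₗ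
        LinearMap.lTensor C (Coalgebra.counit (R := k) (A := C))) x) :
    (∀ c : C, Coalgebra.comul (R := k) c ∈ cot) ∧
      (∀ x ∈ cot, ∃ c : C, Coalgebra.comul (R := k) c = x) := by
  -- the defining map of the cotensor product
  set F : C ⊗[k] C →ₗ[k] C ⊗[k] (D ⊗[k] C) :=
    (TensorProduct.assoc k C D C).toLinearMap ∘ₗ (LinearMap.rTensor C ρr) with hF
  set G : C ⊗[k] C →ₗ[k] C ⊗[k] (D ⊗[k] C) := LinearMap.lTensor C ρl with hG
  have hcot' : ∀ y : C ⊗[k] C, y ∈ cot ↔ F y = G y := by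
    intro y
    rw [hcot, LinearMap.mem_ker]
    constructor
    · intro h
      have h' : F y - G y = 0 := h
      exact sub_eq_zero.mp h'
    · intro h
      show F y - G y = 0
      exact sub_eq_zero_of_eq h
  constructor
  · -- Part 1 : `Δ c ∈ C □_D C`
    intro c
    rw [hcot' (Coalgebra.comul c)]
    show (TensorProduct.assoc k C D C)
        (LinearMap.rTensor C ρr (Coalgebra.comul c)) =
      LinearMap.lTensor C ρl (Coalgebra.comul c)
    rw [hρr, hρl]
    exact aux_part1 φ.toLinearMap c
  · -- Part 2 : surjectivity
    intro x hx
    set Sl : C ⊗[k] C →ₗ[k] C := (TensorProduct.lid k C).toLinearMap ∘ₗ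
      LinearMap.rTensor C (Coalgebra.counit (R := k) (A := C)) with hSl
    set Sr : C ⊗[k] C →ₗ[k] C := (TensorProduct.rid k C).toLinearMap ∘ₗ
      LinearMap.lTensor C (Coalgebra.counit (R := k) (A := C)) with hSr
    refine ⟨(TensorProduct.rid k C)
      (LinearMap.lTensor C (Coalgebra.counit (R := k)) x), ?_⟩
    have hFG : F x = G x := (hcot' x).mp hx
    -- the doubled element is killed by `lTensor C (F - G)`
    have hFz : LinearMap.lTensor C F
        ((TensorProduct.assoc k C C C)
          (LinearMap.rTensor C (Coalgebra.comul (R := k)) x)) =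
        LinearMap.lTensor C G
        ((TensorProduct.assoc k C C C)
          (LinearMap.rTensor C (Coalgebra.comul (R := k)) x)) := by
      have e1 := LinearMap.congr_fun (aux_EqR φ.toLinearMap ρr hρr) x
      have e2 := LinearMap.congr_fun (aux_EqL (k := k) ρl) x
      simp only [LinearMap.comp_apply, LinearEquiv.coe_coe] at e1 e2
      have e3 : (TensorProduct.assoc k C C (D ⊗[k] C))
          (LinearMap.rTensor (D ⊗[k] C) (Coalgebra.comul (R := k)) (F x)) =
          (TensorProduct.assoc k C C (D ⊗[k] C))
          (LinearMap.rTensor (D ⊗[k] C) (Coalgebra.comul (R := k)) (G x)) := by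
        rw [hFG]
      exact e1.trans (e3.trans e2.symm)
    -- ker (F-G) ≤ ker (Sl - Sr), so Sl - Sr factors through F - G
    have hker : LinearMap.ker (F - G) ≤ LinearMap.ker (Sl - Sr) := by
      intro y hy
      rw [LinearMap.mem_ker] at hy ⊢
      have hy' : F y - G y = 0 := hy
      have hmem : y ∈ cot := (hcot' y).mpr (sub_eq_zero.mp hy')
      have h := hsymm y hmem
      show Sl y - Sr y = 0
      exact sub_eq_zero_of_eq h
    obtain ⟨T, hT⟩ := aux_factor_through_of_ker_le_ker (F - G) (Sl - Sr) hker
    have hL0 : LinearMap.lTensor C (F - G)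
        ((TensorProduct.assoc k C C C)
          (LinearMap.rTensor C (Coalgebra.comul (R := k)) x)) = 0 := by
      have hsub : LinearMap.lTensor C (F - G)
          ((TensorProduct.assoc k C C C)
            (LinearMap.rTensor C (Coalgebra.comul (R := k)) x)) =
          LinearMap.lTensor C F
            ((TensorProduct.assoc k C C C)
              (LinearMap.rTensor C (Coalgebra.comul (R := k)) x)) -
          LinearMap.lTensor C G
            ((TensorProduct.assoc k C C C)
              (LinearMap.rTensor C (Coalgebra.comul (R := k)) x)) :=
        LinearMap.congr_fun (LinearMap.lTensor_sub (M := C) F G) _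
      rw [hsub, hFz, sub_self]
    have hSz : LinearMap.lTensor C (Sl - Sr)
        ((TensorProduct.assoc k C C C)
          (LinearMap.rTensor C (Coalgebra.comul (R := k)) x)) = 0 := by
      have h1 : LinearMap.lTensor C (Sl - Sr)
          ((TensorProduct.assoc k C C C)
            (LinearMap.rTensor C (Coalgebra.comul (R := k)) x)) =
          LinearMap.lTensor C T
            (LinearMap.lTensor C (F - G)
              ((TensorProduct.assoc k C C C)
                (LinearMap.rTensor C (Coalgebra.comul (R := k)) x))) := by
        rw [hT, LinearMap.lTensor_comp, LinearMap.comp_apply]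
      rw [h1, hL0, map_zero]
    have b1 := LinearMap.congr_fun (aux_B1 (k := k) (C := C)) x
    have b2 := LinearMap.congr_fun (aux_B2 (k := k) (C := C)) x
    simp only [LinearMap.comp_apply, LinearEquiv.coe_coe, LinearMap.id_apply] at b1 b2
    have hB : LinearMap.lTensor C (Sl - Sr)
        ((TensorProduct.assoc k C C C)
          (LinearMap.rTensor C (Coalgebra.comul (R := k)) x)) =
        x - Coalgebra.comul
          ((TensorProduct.rid k C) (LinearMap.lTensor C (Coalgebra.counit (R := k)) x)) := by
      have hsub2 : LinearMap.lTensor C (Sl - Sr)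
          ((TensorProduct.assoc k C C C)
            (LinearMap.rTensor C (Coalgebra.comul (R := k)) x)) =
          LinearMap.lTensor C Sl
            ((TensorProduct.assoc k C C C)
              (LinearMap.rTensor C (Coalgebra.comul (R := k)) x)) -
          LinearMap.lTensor C Sr
            ((TensorProduct.assoc k C C C)
              (LinearMap.rTensor C (Coalgebra.comul (R := k)) x)) :=
        LinearMap.congr_fun (LinearMap.lTensor_sub (M := C) Sl Sr) _
      rw [hsub2, hSl, hSr, b1, b2]
    have hfinal : x - Coalgebra.comul
        ((TensorProduct.rid k C) (LinearMap.lTensor C (Coalgebra.counit (R := k)) x)) = 0 :=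
      hB.symm.trans hSz
    exact (sub_eq_zero.mp hfinal).symm
end

section
/- Let φ: C → D be a coalgebra map such that Δ_C: C → C □_D C is surjective. Then φ is a monomorphism in the category of k-coalgebras: for any coalgebra E and coalgebra maps f, g: E → C with φ∘f = φ∘g, one has f = g. -/
open TensorProduct LinearMap

/-- If `Δ_C : C → C □_D C` is surjective, then `φ` is a
monomorphism in the category of `k`-coalgebras: for any coalgebra `E`
and coalgebra maps `f, g : E → C` with `φ ∘ f = φ ∘ g` one has `f = g`. -/
theorem mono_of_comul_surjective_onto_cotensor
    {k : Type*} [Field k]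
    {C : Type*} [AddCommGroup C] [Module k C] [Coalgebra k C]
    {D : Type*} [AddCommGroup D] [Module k D] [Coalgebra k D]
    (φ : C →ₗc[k] D)
    (ρr : C →ₗ[k] C ⊗[k] D)
    (hρr : ρr = (LinearMap.lTensor C φ.toLinearMap) ∘ₗ Coalgebra.comul)
    (ρl : C →ₗ[k] D ⊗[k] C)
    (hρl : ρl = (LinearMap.rTensor C φ.toLinearMap) ∘ₗ Coalgebra.comul)
    (cot : Submodule k (C ⊗[k] C))
    (hcot : cot = LinearMap.ker
      ((TensorProduct.assoc k C D C).toLinearMap ∘ₗ (LinearMap.rTensor C ρr)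
        - LinearMap.lTensor C ρl))
    -- hypothesis: Δ_C : C → C □_D C is surjective
    (hsurj : ∀ x ∈ cot, ∃ c : C, Coalgebra.comul (R := k) c = x) :
    ∀ (E : Type*) [AddCommGroup E] [Module k E] [Coalgebra k E]
      (f g : E →ₗc[k] C), φ.comp f = φ.comp g → f = g := by
  intro E _ _ _ f g hfg
  set F : E →ₗ[k] C := f.toLinearMap with hF
  set G : E →ₗ[k] C := g.toLinearMap with hG
  set P : C →ₗ[k] D := φ.toLinearMap with hP
  have hPFG : P ∘ₗ F = P ∘ₗ G := congrArg CoalgHom.toLinearMap hfg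
  set δE : E →ₗ[k] E ⊗[k] E := Coalgebra.comul with hδE
  set δC : C →ₗ[k] C ⊗[k] C := Coalgebra.comul with hδC
  -- comultiplicativity of f and g
  have hfδ : TensorProduct.map F F ∘ₗ δE = δC ∘ₗ F := f.map_comp_comul
  have hgδ : TensorProduct.map G G ∘ₗ δE = δC ∘ₗ G := g.map_comp_comul
  -- the right coaction composed with F
  have hρrF : ρr ∘ₗ F = TensorProduct.map F (P ∘ₗ F) ∘ₗ δE := by
    rw [hρr, comp_assoc, ← hfδ, ← comp_assoc, lTensor_comp_map]
  have hρlG : ρl ∘ₗ G = TensorProduct.map (P ∘ₗ G) G ∘ₗ δE := by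
    rw [hρl, comp_assoc, ← hgδ, ← comp_assoc, rTensor_comp_map]
  -- the key identity, pointwise: (f ⊗ g)(Δ_E e) lands in the cotensor product
  have key : ∀ e : E,
      (TensorProduct.assoc k C D C) ((LinearMap.rTensor C ρr) (TensorProduct.map F G (δE e)))
      = LinearMap.lTensor C ρl (TensorProduct.map F G (δE e)) := by
    intro e
    have lhs1 : LinearMap.rTensor C ρr ∘ₗ TensorProduct.map F G
        = TensorProduct.map (ρr ∘ₗ F) G := by rw [rTensor_comp_map]
    have rhs1 : LinearMap.lTensor C ρl ∘ₗ TensorProduct.map F G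
        = TensorProduct.map F (ρl ∘ₗ G) := by rw [lTensor_comp_map]
    have lhs2 : TensorProduct.map (ρr ∘ₗ F) G
        = TensorProduct.map (TensorProduct.map F (P ∘ₗ F)) G ∘ₗ LinearMap.rTensor E δE := by
      rw [hρrF]
      rw [show LinearMap.rTensor E δE = TensorProduct.map δE LinearMap.id from rfl,
        ← TensorProduct.map_comp, comp_id]
    have rhs2 : TensorProduct.map F (ρl ∘ₗ G)
        = TensorProduct.map F (TensorProduct.map (P ∘ₗ G) G) ∘ₗ LinearMap.lTensor E δE := by
      rw [hρlG]
      rw [show LinearMap.lTensor E δE = TensorProduct.map LinearMap.id δE from rfl,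
        ← TensorProduct.map_comp, comp_id]
    calc (TensorProduct.assoc k C D C) ((LinearMap.rTensor C ρr) (TensorProduct.map F G (δE e)))
        = (TensorProduct.assoc k C D C)
            ((TensorProduct.map (TensorProduct.map F (P ∘ₗ F)) G)
              ((LinearMap.rTensor E δE) (δE e))) := by
          rw [← LinearMap.comp_apply (LinearMap.rTensor C ρr), lhs1, lhs2]
          rfl
      _ = TensorProduct.map F (TensorProduct.map (P ∘ₗ F) G)
            ((TensorProduct.assoc k E E E) ((LinearMap.rTensor E δE) (δE e))) := by
          rw [TensorProduct.map_map_assoc]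
      _ = TensorProduct.map F (TensorProduct.map (P ∘ₗ G) G)
            ((LinearMap.lTensor E δE) (δE e)) := by
          rw [Coalgebra.coassoc_apply, hPFG]
      _ = LinearMap.lTensor C ρl (TensorProduct.map F G (δE e)) := by
          rw [← LinearMap.comp_apply (LinearMap.lTensor C ρl), rhs1, rhs2]
          rfl
  -- now argue pointwise
  apply CoalgHom.ext
  intro e
  set x : C ⊗[k] C := TensorProduct.map F G (δE e) with hx
  have hxmem : x ∈ cot := by
    rw [hcot, LinearMap.mem_ker]
    simpa [sub_eq_zero, hx] using key e
  obtain ⟨c, hc⟩ := hsurj x hxmem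
  have hδCc : δC c = x := hc
  -- apply (id ⊗ counit) to get F e = c
  have h1 : (Coalgebra.counit (R := k) (A := C)).lTensor C (δC c)
      = c ⊗ₜ[k] (1 : k) := Coalgebra.lTensor_counit_comul c
  have h2 : (Coalgebra.counit (R := k) (A := C)).lTensor C x = (F e) ⊗ₜ[k] (1 : k) := by
    rw [hx]
    have comp1 : (Coalgebra.counit (R := k) (A := C)).lTensor C ∘ₗ TensorProduct.map F G
        = TensorProduct.map F (Coalgebra.counit (R := k) (A := E)) := by
      rw [lTensor_comp_map, g.counit_comp]
    have comp2 : TensorProduct.map F (Coalgebra.counit (R := k) (A := E))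
        = F.rTensor k ∘ₗ (Coalgebra.counit (R := k) (A := E)).lTensor E := by
      rw [show (Coalgebra.counit (R := k) (A := E)).lTensor E
          = TensorProduct.map LinearMap.id (Coalgebra.counit (R := k) (A := E)) from rfl,
        show F.rTensor k = TensorProduct.map F LinearMap.id from rfl,
        ← TensorProduct.map_comp, comp_id, id_comp]
    rw [← LinearMap.comp_apply, comp1, comp2, LinearMap.comp_apply,
      Coalgebra.lTensor_counit_comul, rTensor_tmul]
  have hFe : F e = c := by
    have h3 : (F e) ⊗ₜ[k] (1 : k) = c ⊗ₜ[k] (1 : k) := by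
      rw [← h2, ← h1, hδCc]
    have := congrArg (TensorProduct.rid k C) h3
    simpa using this
  -- apply (counit ⊗ id) to get G e = c
  have h4 : (Coalgebra.counit (R := k) (A := C)).rTensor C (δC c)
      = (1 : k) ⊗ₜ[k] c := Coalgebra.rTensor_counit_comul c
  have h5 : (Coalgebra.counit (R := k) (A := C)).rTensor C x = (1 : k) ⊗ₜ[k] (G e) := by
    rw [hx]
    have comp1 : (Coalgebra.counit (R := k) (A := C)).rTensor C ∘ₗ TensorProduct.map F G
        = TensorProduct.map (Coalgebra.counit (R := k) (A := E)) G := by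
      rw [rTensor_comp_map, f.counit_comp]
    have comp2 : TensorProduct.map (Coalgebra.counit (R := k) (A := E)) G
        = G.lTensor k ∘ₗ (Coalgebra.counit (R := k) (A := E)).rTensor E := by
      rw [show (Coalgebra.counit (R := k) (A := E)).rTensor E
          = TensorProduct.map (Coalgebra.counit (R := k) (A := E)) LinearMap.id from rfl,
        show G.lTensor k = TensorProduct.map LinearMap.id G from rfl,
        ← TensorProduct.map_comp, comp_id, id_comp]
    rw [← LinearMap.comp_apply, comp1, comp2, LinearMap.comp_apply,
      Coalgebra.rTensor_counit_comul, lTensor_tmul]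
  have hGe : G e = c := by
    have h6 : (1 : k) ⊗ₜ[k] (G e) = (1 : k) ⊗ₜ[k] c := by
      rw [← h5, ← h4, hδCc]
    have := congrArg (TensorProduct.lid k C) h6
    simpa using this
  show F e = G e
  rw [hFe, hGe]
end

section
/- Let φ: C → D be a coalgebra map with kernel Ker(φ) (a coideal of C, hence a (C,C)-bicomodule, in particular a left C- and hence left D-comodule). If C □_D C ≅ C via Δ_C (i.e., Δ_C: C → C □_D C is surjective), then C □_D Ker(φ) = 0. -/
open TensorProduct LinearMap

/-- Let `φ : C → D` be a coalgebra map and suppose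
`Δ_C : C → C □_D C` is surjective. Then `C □_D Ker(φ) = 0`, where `Ker(φ)` is
a left `D`-comodule via `n ↦ (φ ⊗ I)(Δ_C n)`. -/
theorem cotensor_with_kernel_trivial
    {k : Type*} [Field k]
    {C : Type*} [AddCommGroup C] [Module k C] [Coalgebra k C]
    {D : Type*} [AddCommGroup D] [Module k D] [Coalgebra k D]
    (φ : C →ₗc[k] D)
    -- the right D-comodule structure on C via φ
    (ρr : C →ₗ[k] C ⊗[k] D)
    (hρr : ρr = (LinearMap.lTensor C φ.toLinearMap) ∘ₗ Coalgebra.comul)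
    -- the left D-comodule structure on C via φ
    (ρl : C →ₗ[k] D ⊗[k] C)
    (hρl : ρl = (LinearMap.rTensor C φ.toLinearMap) ∘ₗ Coalgebra.comul)
    -- the cotensor product C □_D C
    (cot : Submodule k (C ⊗[k] C))
    (hcot : cot = LinearMap.ker
      ((TensorProduct.assoc k C D C).toLinearMap ∘ₗ (LinearMap.rTensor C ρr)
        - LinearMap.lTensor C ρl))
    -- hypothesis: Δ_C : C → C □_D C is surjective
    (hsurj : ∀ x ∈ cot, ∃ c : C, Coalgebra.comul (R := k) c = x)
    -- the cotensor product C □_D Ker(φ), cut out inside C ⊗ Ker(φ) by the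
    -- condition Σ aⁱ₍₁₎ ⊗ φ(aⁱ₍₂₎) ⊗ nⁱ = Σ aⁱ ⊗ (φ ⊗ I)(Δ_C nⁱ)
    (cotK : Submodule k (C ⊗[k] (LinearMap.ker φ.toLinearMap)))
    (hcotK : cotK = LinearMap.ker
      (LinearMap.lTensor C
          (LinearMap.lTensor D (LinearMap.ker φ.toLinearMap).subtype) ∘ₗ
        (TensorProduct.assoc k C D (LinearMap.ker φ.toLinearMap)).toLinearMap ∘ₗ
        LinearMap.rTensor (LinearMap.ker φ.toLinearMap) ρr
      - LinearMap.lTensor C (ρl ∘ₗ (LinearMap.ker φ.toLinearMap).subtype))) :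
    cotK = ⊥ := by

  classical
  set K := LinearMap.ker φ.toLinearMap with hK
  set ι := K.subtype with hι
  rw [hcotK, Submodule.eq_bot_iff]
  intro x hx
  rw [LinearMap.mem_ker, LinearMap.sub_apply, sub_eq_zero] at hx
  -- push x into C ⊗ C
  set y : C ⊗[k] C := LinearMap.lTensor C ι x with hy
  -- y lies in cot
  have h1 : LinearMap.rTensor C ρr ∘ₗ LinearMap.lTensor C ι
      = LinearMap.lTensor (C ⊗[k] D) ι ∘ₗ LinearMap.rTensor K ρr := by
    rw [LinearMap.rTensor_comp_lTensor, LinearMap.lTensor_comp_rTensor]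
  have h2 : (TensorProduct.assoc k C D C).toLinearMap ∘ₗ LinearMap.lTensor (C ⊗[k] D) ι
      = LinearMap.lTensor C (LinearMap.lTensor D ι) ∘ₗ
        (TensorProduct.assoc k C D K).toLinearMap := by
    ext c d n
    simp
  have hycot : y ∈ cot := by
    rw [hcot, LinearMap.mem_ker, LinearMap.sub_apply, sub_eq_zero]
    have e1 := LinearMap.congr_fun h1 x
    have e2 := LinearMap.congr_fun h2 (LinearMap.rTensor K ρr x)
    simp only [LinearMap.comp_apply] at e1 e2 hx ⊢
    rw [hy, e1, e2, ← LinearMap.comp_apply (LinearMap.lTensor C ρl), ← LinearMap.lTensor_comp]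
    exact hx
  obtain ⟨c, hc⟩ := hsurj y hycot
  -- (1 ⊗ φ) y = 0
  have hφι : φ.toLinearMap ∘ₗ ι = 0 := by
    ext n
    exact n.2
  have hφy : LinearMap.lTensor C φ.toLinearMap y = 0 := by
    rw [hy, ← LinearMap.comp_apply, ← LinearMap.lTensor_comp, hφι, LinearMap.lTensor_zero,
      LinearMap.zero_apply]
  have hρrc : ρr c = 0 := by
    rw [hρr, LinearMap.comp_apply, hc, hφy]
  -- apply 1 ⊗ ε_D
  have hεφ : Coalgebra.counit ∘ₗ φ.toLinearMap = (Coalgebra.counit : C →ₗ[k] k) :=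
    CoalgHomClass.counit_comp φ
  have hcε : LinearMap.lTensor C (Coalgebra.counit (R := k) (A := C)) (Coalgebra.comul c)
      = 0 := by
    have := congrArg (LinearMap.lTensor C (Coalgebra.counit (R := k) (A := D))) hρrc
    rw [hρr, LinearMap.comp_apply, ← LinearMap.comp_apply (LinearMap.lTensor C _),
      ← LinearMap.lTensor_comp, hεφ, map_zero] at this
    exact this
  have hc0 : c = 0 := by
    have h3 : (c ⊗ₜ[k] (1 : k) : C ⊗[k] k) = 0 := by
      rw [← Coalgebra.lTensor_counit_comul (R := k) c, hcε]
    have := congrArg (TensorProduct.rid k C) h3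
    simpa using this
  have hy0 : y = 0 := by rw [← hc, hc0, map_zero]
  have hinj : Function.Injective (LinearMap.lTensor C ι) :=
    Module.Flat.lTensor_preserves_injective_linearMap ι (Submodule.injective_subtype K)
  exact hinj (by rw [← hy, hy0, map_zero])
end
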